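/- If μ < rc/(κ+c) and r > 0, then H has a local minimum at z̄ = rκ/(r-μ) ∈ (0, κ+c), a local maximum with a root at κ+c, lim_{z↓0} H(z) = +∞, and H has exactly one root z₀ in (0, rκ/(r-μ)); moreover H has no other roots in (0,∞) besides z₀ and κ+c. -/

import Mathlib

open Real Set Filter

lemma aux_deriv (a ν A B m k C z : ℝ) (hz : 0 < z) (ha : 0 < a) :
    HasDerivAt (fun x : ℝ =>
      (m * (A * x ^ (a - ν) - B * x ^ (-a - ν)) -
        (m * x - k) * (A * ((a - ν) * x ^ (a - ν - 1)) - B * ((-a - ν) * x ^ (-a - ν - 1))))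
        * x ^ (2 * ν + 1) / (2 * a) + C)
      ((A * z ^ (a - ν) - B * z ^ (-a - ν)) *
        (m * (1 - (a - ν)) * (1 - (-a - ν)) * z - k * ((a - ν) * (-a - ν))) * z ^ (2 * ν - 1)
        / (2 * a)) z := by
  have hz' : z ≠ 0 := hz.ne'
  have hp : HasDerivAt (fun x : ℝ => x ^ (a - ν)) ((a - ν) * z ^ (a - ν - 1)) z :=
    Real.hasDerivAt_rpow_const (Or.inl hz')
  have hq : HasDerivAt (fun x : ℝ => x ^ (-a - ν)) ((-a - ν) * z ^ (-a - ν - 1)) z :=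
    Real.hasDerivAt_rpow_const (Or.inl hz')
  have hp1 : HasDerivAt (fun x : ℝ => x ^ (a - ν - 1)) ((a - ν - 1) * z ^ (a - ν - 1 - 1)) z :=
    Real.hasDerivAt_rpow_const (Or.inl hz')
  have hq1 : HasDerivAt (fun x : ℝ => x ^ (-a - ν - 1)) ((-a - ν - 1) * z ^ (-a - ν - 1 - 1)) z :=
    Real.hasDerivAt_rpow_const (Or.inl hz')
  have h2ν : HasDerivAt (fun x : ℝ => x ^ (2 * ν + 1)) ((2 * ν + 1) * z ^ (2 * ν + 1 - 1)) z :=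
    Real.hasDerivAt_rpow_const (Or.inl hz')
  have hlin : HasDerivAt (fun x : ℝ => m * x - k) m z := by
    simpa using ((hasDerivAt_id z).const_mul m).sub_const k
  have hN : HasDerivAt (fun x : ℝ =>
      m * (A * x ^ (a - ν) - B * x ^ (-a - ν)) -
        (m * x - k) * (A * ((a - ν) * x ^ (a - ν - 1)) - B * ((-a - ν) * x ^ (-a - ν - 1))))
      (m * (A * ((a - ν) * z ^ (a - ν - 1)) - B * ((-a - ν) * z ^ (-a - ν - 1))) -
        (m * (A * ((a - ν) * z ^ (a - ν - 1)) - B * ((-a - ν) * z ^ (-a - ν - 1))) +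
          (m * z - k) * (A * ((a - ν) * ((a - ν - 1) * z ^ (a - ν - 1 - 1))) -
            B * ((-a - ν) * ((-a - ν - 1) * z ^ (-a - ν - 1 - 1)))))) z := by
    exact (((hp.const_mul A).sub (hq.const_mul B)).const_mul m).sub
      (hlin.mul (((hp1.const_mul (a - ν)).const_mul A).sub
        ((hq1.const_mul (-a - ν)).const_mul B)))
  have hfull := ((hN.mul h2ν).div_const (2 * a)).add_const C
  refine hfull.congr_deriv ?_
  -- now pure algebra on rpow
  have e1 : z ^ (a - ν - 1) = z ^ (a - ν) * z⁻¹ := by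
    rw [show a - ν - 1 = (a - ν) + (-1) by ring, Real.rpow_add hz, Real.rpow_neg_one]
  have e2 : z ^ (-a - ν - 1) = z ^ (-a - ν) * z⁻¹ := by
    rw [show -a - ν - 1 = (-a - ν) + (-1) by ring, Real.rpow_add hz, Real.rpow_neg_one]
  have e3 : z ^ (a - ν - 1 - 1) = z ^ (a - ν) * z⁻¹ * z⁻¹ := by
    rw [show a - ν - 1 - 1 = (a - ν) + (-1) + (-1) by ring, Real.rpow_add hz,
      Real.rpow_add hz, Real.rpow_neg_one]
  have e4 : z ^ (-a - ν - 1 - 1) = z ^ (-a - ν) * z⁻¹ * z⁻¹ := by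
    rw [show -a - ν - 1 - 1 = (-a - ν) + (-1) + (-1) by ring, Real.rpow_add hz,
      Real.rpow_add hz, Real.rpow_neg_one]
  have epq : z ^ (a - ν) * z ^ (-a - ν) = (z ^ (2 * ν))⁻¹ := by
    rw [← Real.rpow_add hz, show a - ν + (-a - ν) = -(2 * ν) by ring, Real.rpow_neg hz.le]
  have e5 : z ^ (2 * ν + 1) = z ^ (2 * ν) * z := by
    rw [Real.rpow_add hz, Real.rpow_one]
  have e6 : z ^ (2 * ν + 1 - 1) = z ^ (2 * ν) := by norm_num
  have e7 : z ^ (2 * ν - 1) = z ^ (2 * ν) * z⁻¹ := by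
    rw [show 2 * ν - 1 = 2 * ν + (-1) by ring, Real.rpow_add hz, Real.rpow_neg_one]
  have hup : (0:ℝ) < z ^ (a - ν) := Real.rpow_pos_of_pos hz _
  have hvp : (0:ℝ) < z ^ (-a - ν) := Real.rpow_pos_of_pos hz _
  have h2νp : (0:ℝ) < z ^ (2 * ν) := Real.rpow_pos_of_pos hz _
  rw [e1, e2, e3, e4, e5, e6, e7]
  have hzν : z ^ (2 * ν) = (z ^ (a - ν) * z ^ (-a - ν))⁻¹ := by
    rw [epq, inv_inv]
  rw [hzν]
  set u := z ^ (a - ν) with hu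
  set v := z ^ (-a - ν) with hv
  have hu0 : u ≠ 0 := hup.ne'
  have hv0 : v ≠ 0 := hvp.ne'
  field_simp [ha.ne']
  ring

lemma aux_split (a ν A B m k C z : ℝ) (hz : 0 < z) (ha : 0 < a) :
    (m * (A * z ^ (a - ν) - B * z ^ (-a - ν)) -
        (m * z - k) * (A * ((a - ν) * z ^ (a - ν - 1)) - B * ((-a - ν) * z ^ (-a - ν - 1))))
      * z ^ (2 * ν + 1) / (2 * a) + C
    = z ^ (ν - a) *
      ((A * m * (1 - (a - ν)) * z ^ (2 * a + 1) + B * m * ((-a - ν) - 1) * z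
          + k * A * (a - ν) * z ^ (2 * a) - k * B * (-a - ν)) / (2 * a) + C * z ^ (a - ν)) := by
  have hz' : z ≠ 0 := hz.ne'
  have hU : (0:ℝ) < z ^ a := Real.rpow_pos_of_pos hz _
  have hV : (0:ℝ) < z ^ ν := Real.rpow_pos_of_pos hz _
  have e1 : z ^ (a - ν) = z ^ a * (z ^ ν)⁻¹ := by
    rw [show a - ν = a + (-ν) by ring, Real.rpow_add hz, Real.rpow_neg hz.le]
  have e2 : z ^ (-a - ν) = (z ^ a)⁻¹ * (z ^ ν)⁻¹ := by
    rw [show -a - ν = (-a) + (-ν) by ring, Real.rpow_add hz, Real.rpow_neg hz.le,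
      Real.rpow_neg hz.le]
  have e3 : z ^ (a - ν - 1) = z ^ a * (z ^ ν)⁻¹ * z⁻¹ := by
    rw [show a - ν - 1 = a + (-ν) + (-1) by ring, Real.rpow_add hz, Real.rpow_add hz,
      Real.rpow_neg hz.le, Real.rpow_neg_one]
  have e4 : z ^ (-a - ν - 1) = (z ^ a)⁻¹ * (z ^ ν)⁻¹ * z⁻¹ := by
    rw [show -a - ν - 1 = (-a) + (-ν) + (-1) by ring, Real.rpow_add hz, Real.rpow_add hz,
      Real.rpow_neg hz.le, Real.rpow_neg hz.le, Real.rpow_neg_one]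
  have e5 : z ^ (2 * ν + 1) = z ^ ν * z ^ ν * z := by
    rw [show 2 * ν + 1 = ν + ν + 1 by ring, Real.rpow_add hz, Real.rpow_add hz, Real.rpow_one]
  have e6 : z ^ (ν - a) = z ^ ν * (z ^ a)⁻¹ := by
    rw [show ν - a = ν + (-a) by ring, Real.rpow_add hz, Real.rpow_neg hz.le]
  have e7 : z ^ (2 * a + 1) = z ^ a * z ^ a * z := by
    rw [show 2 * a + 1 = a + a + 1 by ring, Real.rpow_add hz, Real.rpow_add hz, Real.rpow_one]
  have e8 : z ^ (2 * a) = z ^ a * z ^ a := by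
    rw [show 2 * a = a + a by ring, Real.rpow_add hz]
  rw [e1, e2, e3, e4, e5, e6, e7, e8]
  set U := z ^ a
  set V := z ^ ν
  field_simp [ha.ne']
  ring
set_option maxHeartbeats 1000000 in
theorem stmt_7 (μ σ r lam κ c : ℝ) (hσ : 0 < σ) (hlam : 0 < lam) (hκ : 0 < κ) (hc : 0 ≤ c)
    (hlr : max μ 0 < lam + r)
    (ν : ℝ) (hν : ν = μ / σ ^ 2 - 1 / 2)
    (φ ψ F G s' H : ℝ → ℝ) (w : ℝ)
    (hφ : ∀ x : ℝ, φ x = x ^ (-Real.sqrt (ν ^ 2 + 2 * (lam + r) / σ ^ 2) - ν))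
    (hψ : ∀ x : ℝ, ψ x = x ^ (Real.sqrt (ν ^ 2 + 2 * (lam + r) / σ ^ 2) - ν))
    (hF : ∀ z : ℝ, F z = ((r - μ) / (lam + r - μ)) * z - r * κ / (lam + r))
    (hG : ∀ z : ℝ, G z = φ (κ + c) * ψ z - φ z * ψ (κ + c))
    (hw : w = 2 * Real.sqrt (ν ^ 2 + 2 * (lam + r) / σ ^ 2))
    (hs : ∀ z : ℝ, s' z = z ^ (-2 * ν - 1))
    (hH : ∀ z : ℝ, H z = (deriv F z * G z - F z * deriv G z) / (w * s' z) + F (κ + c))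
    (hr : 0 < r) (hμ : μ < r * c / (κ + c)) :
    r * κ / (r - μ) ∈ Set.Ioo (0 : ℝ) (κ + c) ∧
    IsLocalMin H (r * κ / (r - μ)) ∧
    IsLocalMax H (κ + c) ∧ H (κ + c) = 0 ∧
    Filter.Tendsto H (nhdsWithin 0 (Set.Ioi (0 : ℝ))) Filter.atTop ∧
    ∃ z₀ ∈ Set.Ioo (0 : ℝ) (r * κ / (r - μ)), H z₀ = 0 ∧
      ∀ z ∈ Set.Ioi (0 : ℝ), H z = 0 → z = z₀ ∨ z = κ + c := by
  have hσ2 : (0:ℝ) < σ ^ 2 := by positivity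
  have hlr' : (0:ℝ) < lam + r := lt_of_le_of_lt (le_max_right μ 0) hlr
  have hlrμ : (0:ℝ) < lam + r - μ := by
    have := le_max_left μ 0; linarith [lt_of_le_of_lt (le_max_left μ 0) hlr]
  have hκc : (0:ℝ) < κ + c := by linarith
  have hμr : μ < r := by
    have h1 : r * c / (κ + c) < r := by
      rw [div_lt_iff₀ hκc]; nlinarith
    linarith
  have hrμ : (0:ℝ) < r - μ := by linarith
  set a : ℝ := Real.sqrt (ν ^ 2 + 2 * (lam + r) / σ ^ 2) with ha_def
  have harg : (0:ℝ) < ν ^ 2 + 2 * (lam + r) / σ ^ 2 := by positivity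
  have ha : 0 < a := Real.sqrt_pos.mpr harg
  have ha2 : a ^ 2 = ν ^ 2 + 2 * (lam + r) / σ ^ 2 := Real.sq_sqrt harg.le
  have hν2a : ν ^ 2 < a ^ 2 := by
    rw [ha2]; have : 0 < 2 * (lam + r) / σ ^ 2 := by positivity
    linarith
  have hpν : 0 < a - ν := by nlinarith
  have hqν : 0 < a + ν := by nlinarith
  set m : ℝ := (r - μ) / (lam + r - μ) with hm_def
  set k : ℝ := r * κ / (lam + r) with hk_def
  have hm : 0 < m := by positivity
  have hk : 0 < k := by positivity
  set A : ℝ := (κ + c) ^ (-a - ν) with hA_def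
  set B : ℝ := (κ + c) ^ (a - ν) with hB_def
  have hA : 0 < A := Real.rpow_pos_of_pos hκc _
  have hB : 0 < B := Real.rpow_pos_of_pos hκc _
  set CC : ℝ := m * (κ + c) - k with hCC_def
  set zbar : ℝ := r * κ / (r - μ) with hzbar_def
  have hzbar_pos : 0 < zbar := by positivity
  have hμκc : μ * (κ + c) < r * c := (lt_div_iff₀ hκc).mp hμ
  have hzbar_lt : zbar < κ + c := by
    rw [hzbar_def, div_lt_iff₀ hrμ]
    nlinarith
  -- derivative of F
  have hFd : ∀ z : ℝ, deriv F z = m := by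
    intro z
    have hFfun : F = fun z : ℝ => m * z - k := funext hF
    rw [hFfun]
    simpa using (((hasDerivAt_id z).const_mul m).sub_const k).deriv
  have hGfun : G = fun z : ℝ => A * z ^ (a - ν) - z ^ (-a - ν) * B := by
    funext z; rw [hG, hφ, hψ, hφ, hψ]
  have hGd : ∀ z : ℝ, 0 < z →
      deriv G z = A * ((a - ν) * z ^ (a - ν - 1)) - ((-a - ν) * z ^ (-a - ν - 1)) * B := by
    intro z hz
    rw [hGfun]
    exact (((Real.hasDerivAt_rpow_const (p := a - ν) (Or.inl hz.ne')).const_mul A).sub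
      ((Real.hasDerivAt_rpow_const (p := -a - ν) (Or.inl hz.ne')).mul_const B)).deriv
  have hGkc : G (κ + c) = 0 := by
    rw [hGfun]; simp only [hA_def, hB_def]; ring
  -- explicit formula for H on Ioi 0
  have hHfun : ∀ z : ℝ, 0 < z → H z =
      (m * (A * z ^ (a - ν) - B * z ^ (-a - ν)) -
        (m * z - k) * (A * ((a - ν) * z ^ (a - ν - 1)) - B * ((-a - ν) * z ^ (-a - ν - 1))))
        * z ^ (2 * ν + 1) / (2 * a) + CC := by
    intro z hz
    rw [hH, hFd, hGd z hz, hGfun, hF, hF, hw, hs]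
    have hse : z ^ (-2 * ν - 1) = (z ^ (2 * ν + 1))⁻¹ := by
      rw [show (-2 * ν - 1 : ℝ) = -(2 * ν + 1) by ring, Real.rpow_neg hz.le]
    rw [hse]
    have h1 : (0:ℝ) < z ^ (2 * ν + 1) := Real.rpow_pos_of_pos hz _
    have key : ∀ X t : ℝ, t ≠ 0 → X / (2 * a * t⁻¹) = X * t / (2 * a) := by
      intro X t ht
      rw [div_eq_div_iff (by simp [ht]; positivity) (by positivity)]
      field_simp
    rw [key _ _ h1.ne', hCC_def]
    ring
  have hHderiv : ∀ z : ℝ, 0 < z →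
      HasDerivAt H (G z * (r * κ - (r - μ) * z) * z ^ (2 * ν - 1) / (a * σ ^ 2)) z := by
    intro z hz
    have hd := aux_deriv a ν A B m k CC z hz ha
    have heq : H =ᶠ[nhds z] (fun x : ℝ =>
        (m * (A * x ^ (a - ν) - B * x ^ (-a - ν)) -
          (m * x - k) * (A * ((a - ν) * x ^ (a - ν - 1)) - B * ((-a - ν) * x ^ (-a - ν - 1))))
          * x ^ (2 * ν + 1) / (2 * a) + CC) := by
      filter_upwards [isOpen_Ioi.mem_nhds hz] with x hx
      exact hHfun x hx
    have hd2 := hd.congr_of_eventuallyEq heq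
    refine hd2.congr_deriv ?_
    have hbr : m * (1 - (a - ν)) * (1 - (-a - ν)) * z - k * ((a - ν) * (-a - ν))
        = (2 / σ ^ 2) * (r * κ - (r - μ) * z) := by
      have h1 : (1 - (a - ν)) * (1 - (-a - ν)) = 1 + 2 * ν - (a ^ 2 - ν ^ 2) := by ring
      have h2 : (a - ν) * (-a - ν) = ν ^ 2 - a ^ 2 := by ring
      have hmv : m * (lam + r - μ) = r - μ := by
        rw [hm_def]; field_simp
      have hkv : k * (lam + r) = r * κ := by
        rw [hk_def]; field_simp
      have h3 : 1 + 2 * ν = 2 * μ / σ ^ 2 := by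
        rw [hν]; field_simp; ring
      have h4 : a ^ 2 - ν ^ 2 = 2 * (lam + r) / σ ^ 2 := by linarith
      linear_combination (m * z) * h3 + (k - m * z) * h4 + (-2 * z / σ ^ 2) * hmv
        + (2 / σ ^ 2) * hkv
    simp only [hGfun, hbr]
    field_simp [ha.ne', hσ2.ne']
  -- sign of G
  have hGneg : ∀ z : ℝ, 0 < z → z < κ + c → G z < 0 := by
    intro z hz hlt
    have key : z ^ (2 * a) < (κ + c) ^ (2 * a) :=
      Real.rpow_lt_rpow hz.le hlt (by linarith)
    have ez : z ^ (a - ν) = z ^ (2 * a) * z ^ (-a - ν) := by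
      rw [← Real.rpow_add hz]; congr 1; ring
    have ekc : (κ + c) ^ (a - ν) = (κ + c) ^ (2 * a) * (κ + c) ^ (-a - ν) := by
      rw [← Real.rpow_add hκc]; congr 1; ring
    have hP : (0:ℝ) < z ^ (-a - ν) * (κ + c) ^ (-a - ν) := by
      have := Real.rpow_pos_of_pos hz (-a - ν)
      have := Real.rpow_pos_of_pos hκc (-a - ν)
      positivity
    have hmul := mul_lt_mul_of_pos_right key hP
    rw [hGfun]
    simp only
    rw [hB_def, ez, ekc]
    rw [hA_def]
    linarith [hmul]
  have hGpos : ∀ z : ℝ, κ + c < z → 0 < G z := by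
    intro z hlt
    have hz : 0 < z := hκc.trans hlt
    have key : (κ + c) ^ (2 * a) < z ^ (2 * a) :=
      Real.rpow_lt_rpow hκc.le hlt (by linarith)
    have ez : z ^ (a - ν) = z ^ (2 * a) * z ^ (-a - ν) := by
      rw [← Real.rpow_add hz]; congr 1; ring
    have ekc : (κ + c) ^ (a - ν) = (κ + c) ^ (2 * a) * (κ + c) ^ (-a - ν) := by
      rw [← Real.rpow_add hκc]; congr 1; ring
    have hP : (0:ℝ) < z ^ (-a - ν) * (κ + c) ^ (-a - ν) := by
      have := Real.rpow_pos_of_pos hz (-a - ν)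
      have := Real.rpow_pos_of_pos hκc (-a - ν)
      positivity
    have hmul := mul_lt_mul_of_pos_right key hP
    rw [hGfun]
    simp only
    rw [hB_def, ez, ekc]
    rw [hA_def]
    linarith [hmul]
  -- bracket sign
  have hbr_pos : ∀ z : ℝ, z < zbar → 0 < r * κ - (r - μ) * z := by
    intro z hzb
    have := (lt_div_iff₀ hrμ).mp (hzbar_def ▸ hzb)
    nlinarith
  have hbr_neg : ∀ z : ℝ, zbar < z → r * κ - (r - μ) * z < 0 := by
    intro z hzb
    have := (div_lt_iff₀ hrμ).mp (hzbar_def ▸ hzb)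
    nlinarith
  have hden : (0:ℝ) < a * σ ^ 2 := by positivity
  -- monotonicity
  have anti1 : StrictAntiOn H (Ioc 0 zbar) := by
    apply strictAntiOn_of_deriv_neg (convex_Ioc _ _)
    · intro x hx
      exact (hHderiv x hx.1).continuousAt.continuousWithinAt
    · intro x hx
      rw [interior_Ioc] at hx
      rw [(hHderiv x hx.1).deriv]
      have hg := hGneg x hx.1 (hx.2.trans hzbar_lt)
      have hb := hbr_pos x hx.2
      have hzp : (0:ℝ) < x ^ (2 * ν - 1) := Real.rpow_pos_of_pos hx.1 _
      exact div_neg_of_neg_of_pos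
        (mul_neg_of_neg_of_pos (mul_neg_of_neg_of_pos hg hb) hzp) hden
  have mono2 : StrictMonoOn H (Icc zbar (κ + c)) := by
    apply strictMonoOn_of_deriv_pos (convex_Icc _ _)
    · intro x hx
      exact (hHderiv x (hzbar_pos.trans_le hx.1)).continuousAt.continuousWithinAt
    · intro x hx
      rw [interior_Icc] at hx
      have hx0 : 0 < x := hzbar_pos.trans hx.1
      rw [(hHderiv x hx0).deriv]
      have hg := hGneg x hx0 hx.2
      have hb := hbr_neg x hx.1
      have hzp : (0:ℝ) < x ^ (2 * ν - 1) := Real.rpow_pos_of_pos hx0 _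
      exact div_pos (mul_pos (mul_pos_of_neg_of_neg hg hb) hzp) hden
  have anti3 : StrictAntiOn H (Ici (κ + c)) := by
    apply strictAntiOn_of_deriv_neg (convex_Ici _)
    · intro x hx
      exact (hHderiv x (hκc.trans_le hx)).continuousAt.continuousWithinAt
    · intro x hx
      rw [interior_Ici] at hx
      have hx0 : 0 < x := hκc.trans hx
      rw [(hHderiv x hx0).deriv]
      have hg := hGpos x hx
      have hb := hbr_neg x (hzbar_lt.trans hx)
      have hzp : (0:ℝ) < x ^ (2 * ν - 1) := Real.rpow_pos_of_pos hx0 _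
      exact div_neg_of_neg_of_pos
        (mul_neg_of_neg_of_pos (mul_neg_of_pos_of_neg hg hb) hzp) hden
  -- H (κ+c) = 0
  have hHkc : H (κ + c) = 0 := by
    have hdG := hGd (κ + c) hκc
    have t1 : (κ + c) ^ (-a - ν) * (κ + c) ^ (a - ν - 1) = (κ + c) ^ (-2 * ν - 1) := by
      rw [← Real.rpow_add hκc]; congr 1; ring
    have t2 : (κ + c) ^ (-a - ν - 1) * (κ + c) ^ (a - ν) = (κ + c) ^ (-2 * ν - 1) := by
      rw [← Real.rpow_add hκc]; congr 1; ring
    have e1 : A * ((a - ν) * (κ + c) ^ (a - ν - 1)) - (-a - ν) * (κ + c) ^ (-a - ν - 1) * B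
        = 2 * a * (κ + c) ^ (-2 * ν - 1) := by
      rw [hA_def, hB_def]
      calc (κ + c) ^ (-a - ν) * ((a - ν) * (κ + c) ^ (a - ν - 1)) -
          (-a - ν) * (κ + c) ^ (-a - ν - 1) * (κ + c) ^ (a - ν)
          = (a - ν) * ((κ + c) ^ (-a - ν) * (κ + c) ^ (a - ν - 1)) -
            (-a - ν) * ((κ + c) ^ (-a - ν - 1) * (κ + c) ^ (a - ν)) := by ring
        _ = 2 * a * (κ + c) ^ (-2 * ν - 1) := by rw [t1, t2]; ring
    have hE : (0:ℝ) < (κ + c) ^ (-2 * ν - 1) := Real.rpow_pos_of_pos hκc _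
    rw [hH, hFd, hdG, e1, hGkc, hw, hs]
    field_simp
    ring
  -- local min at zbar
  have hmin : IsLocalMin H zbar := by
    have hmem : Ioo (0:ℝ) (κ + c) ∈ nhds zbar :=
      isOpen_Ioo.mem_nhds ⟨hzbar_pos, hzbar_lt⟩
    filter_upwards [hmem] with x hx
    rcases le_total x zbar with h | h
    · exact anti1.antitoneOn ⟨hx.1, h⟩ ⟨hzbar_pos, le_rfl⟩ h
    · exact mono2.monotoneOn ⟨le_rfl, hzbar_lt.le⟩ ⟨h, hx.2.le⟩ h
  -- local max at κ+c
  have hmax : IsLocalMax H (κ + c) := by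
    have hmem : Ioi zbar ∈ nhds (κ + c) := isOpen_Ioi.mem_nhds hzbar_lt
    filter_upwards [hmem] with x hx
    rcases le_total x (κ + c) with h | h
    · exact mono2.monotoneOn ⟨hx.le, h⟩ ⟨hzbar_lt.le, le_rfl⟩ h
    · exact anti3.antitoneOn (Set.mem_Ici.mpr le_rfl) h h
  -- tendsto at 0+
  have hsplit : ∀ z : ℝ, 0 < z → H z = z ^ (ν - a) *
      ((A * m * (1 - (a - ν)) * z ^ (2 * a + 1) + B * m * ((-a - ν) - 1) * z
        + k * A * (a - ν) * z ^ (2 * a) - k * B * (-a - ν)) / (2 * a) + CC * z ^ (a - ν)) := by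
    intro z hz
    rw [hHfun z hz, aux_split a ν A B m k CC z hz ha]
  have hrp : ∀ e : ℝ, 0 < e →
      Tendsto (fun z : ℝ => z ^ e) (nhdsWithin 0 (Ioi 0)) (nhds 0) := by
    intro e he
    have hcont := (Real.continuousAt_rpow_const 0 e (Or.inr he.le)).tendsto
    rw [Real.zero_rpow he.ne'] at hcont
    exact hcont.mono_left nhdsWithin_le_nhds
  have hid0 : Tendsto (fun z : ℝ => z) (nhdsWithin 0 (Ioi 0)) (nhds 0) :=
    Filter.tendsto_id.mono_left nhdsWithin_le_nhds
  have hQ : Tendsto (fun z : ℝ =>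
      (A * m * (1 - (a - ν)) * z ^ (2 * a + 1) + B * m * ((-a - ν) - 1) * z
        + k * A * (a - ν) * z ^ (2 * a) - k * B * (-a - ν)) / (2 * a) + CC * z ^ (a - ν))
      (nhdsWithin 0 (Ioi 0)) (nhds (k * B * (a + ν) / (2 * a))) := by
    have T := (((((hrp (2 * a + 1) (by linarith)).const_mul (A * m * (1 - (a - ν)))).add
        (hid0.const_mul (B * m * ((-a - ν) - 1)))).add
        ((hrp (2 * a) (by linarith)).const_mul (k * A * (a - ν)))).sub_const
        (k * B * (-a - ν))).div_const (2 * a) |>.add ((hrp (a - ν) hpν).const_mul CC)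
    have hval : (A * m * (1 - (a - ν)) * 0 + B * m * ((-a - ν) - 1) * 0
        + k * A * (a - ν) * 0 - k * B * (-a - ν)) / (2 * a) + CC * 0
        = k * B * (a + ν) / (2 * a) := by ring
    exact hval ▸ T
  have hLpos : 0 < k * B * (a + ν) / (2 * a) :=
    div_pos (mul_pos (mul_pos hk hB) hqν) (by linarith)
  have hpow : Tendsto (fun z : ℝ => z ^ (ν - a)) (nhdsWithin 0 (Ioi 0)) atTop := by
    have h1 := (tendsto_rpow_atTop hpν).comp tendsto_inv_nhdsGT_zero
    refine Tendsto.congr' ?_ h1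
    filter_upwards [self_mem_nhdsWithin] with x (hx : 0 < x)
    show (x⁻¹) ^ (a - ν) = x ^ (ν - a)
    rw [Real.inv_rpow hx.le, ← Real.rpow_neg hx.le]
    congr 1
    ring
  have hT : Tendsto H (nhdsWithin 0 (Ioi 0)) atTop := by
    have := Filter.Tendsto.atTop_mul_pos hLpos hpow hQ
    refine Tendsto.congr' ?_ this
    filter_upwards [self_mem_nhdsWithin] with x (hx : 0 < x)
    exact (hsplit x hx).symm
  -- H zbar < 0
  have hHzbar : H zbar < 0 := by
    have := mono2 ⟨le_rfl, hzbar_lt.le⟩ ⟨hzbar_lt.le, le_rfl⟩ hzbar_lt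
    rw [hHkc] at this
    exact this
  -- find z1 with 0 < z1 < zbar, H z1 > 0
  have hz1ex : ∃ z1 : ℝ, 0 < z1 ∧ z1 < zbar ∧ 0 < H z1 := by
    have h1 : ∀ᶠ z in nhdsWithin (0:ℝ) (Ioi 0), 0 < H z := hT.eventually_gt_atTop 0
    have h2 : ∀ᶠ z in nhdsWithin (0:ℝ) (Ioi 0), z < zbar :=
      eventually_nhdsWithin_of_eventually_nhds
        (Filter.Tendsto.eventually_lt_const hzbar_pos Filter.tendsto_id)
    have h3 : ∀ᶠ z in nhdsWithin (0:ℝ) (Ioi 0), 0 < z := self_mem_nhdsWithin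
    obtain ⟨z1, hz1a, hz1b, hz1c⟩ := (h3.and (h2.and h1)).exists
    exact ⟨z1, hz1a, hz1b, hz1c⟩
  obtain ⟨z1, hz1p, hz1lt, hz1H⟩ := hz1ex
  -- IVT
  have hcontIcc : ContinuousOn H (Icc z1 zbar) := by
    intro x hx
    exact (hHderiv x (hz1p.trans_le hx.1)).continuousAt.continuousWithinAt
  have hIVT := intermediate_value_Ioo' hz1lt.le hcontIcc
  have h0mem : (0:ℝ) ∈ Ioo (H zbar) (H z1) := ⟨hHzbar, hz1H⟩
  obtain ⟨z₀, hz₀mem, hz₀H⟩ := hIVT h0mem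
  have hz₀pos : 0 < z₀ := hz1p.trans hz₀mem.1
  have hz₀lt : z₀ < zbar := hz₀mem.2
  refine ⟨⟨hzbar_pos, hzbar_lt⟩, hmin, hmax, hHkc, hT, z₀, ⟨hz₀pos, hz₀lt⟩, hz₀H, ?_⟩
  intro z hz hHz
  by_cases hzkc : z = κ + c
  · exact Or.inr hzkc
  · left
    rcases lt_trichotomy z z₀ with h | h | h
    · exfalso
      have := anti1 ⟨hz, (h.trans hz₀lt).le⟩ ⟨hz₀pos, hz₀lt.le⟩ h
      rw [hHz, hz₀H] at this
      exact lt_irrefl 0 this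
    · exact h
    · exfalso
      rcases le_or_gt z zbar with h2 | h2
      · have := anti1 ⟨hz₀pos, hz₀lt.le⟩ ⟨hz, h2⟩ h
        rw [hHz, hz₀H] at this
        exact lt_irrefl 0 this
      · rcases lt_or_gt_of_ne hzkc with h3 | h3
        · have := mono2 ⟨h2.le, h3.le⟩ ⟨hzbar_lt.le, le_rfl⟩ h3
          rw [hHz, hHkc] at this
          exact lt_irrefl 0 this
        · have := anti3 (Set.mem_Ici.mpr le_rfl) h3.le h3
          rw [hHz, hHkc] at this
          exact lt_irrefl 0 this
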